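/- (Theorem 1, expectation form.) Fix a > 1 and λ ∈ (0,1), let (X_i)_{i≥1} be independent, identically distributed positive random variables with 0 < E[X_1] < ∞ and E[X_1²] = ∞, and let A′ be the reordered on/off process built from (X_i) with cycle endpoints T_N = (a/λ)·Σ_{i=1}^N X_i and queue Q(t) = sup_{0≤s≤t} ∫_s^t (A′(u) − 1) du. Then the expected time-averaged queue length over cycle endpoints tends to infinity: E[(1/T_N) ∫_0^{T_N} Q(t) dt] → ∞ as N → ∞. -/

import Mathlib

open MeasureTheory ProbabilityTheory Filter Finset Set
open scoped ENNReal Topology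

lemma aux_ratio {x s N : ℝ} (hx : 0 < x) (hs : 0 ≤ s) (hN : 1 ≤ N) :
    (min x N) ^ 2 / (N + s) ≤ x ^ 2 / (x + s) := by
  have hNpos : 0 < N := lt_of_lt_of_le one_pos hN
  have h1 : 0 < x + s := by linarith
  have h2 : 0 < N + s := by linarith
  rcases le_total x N with h | h
  · rw [min_eq_left h]
    exact div_le_div_of_nonneg_left (by positivity) h1 (by linarith)
  · rw [min_eq_right h]
    rw [div_le_div_iff₀ h2 h1]
    nlinarith [mul_nonneg (mul_nonneg hNpos.le hx.le) (sub_nonneg.2 h),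
      mul_nonneg hs (sq_nonneg (x - N)),
      mul_nonneg (mul_nonneg hs hNpos.le) (sub_nonneg.2 h)]

lemma pathwise (a lam : ℝ) (ha : 1 < a) (hlam0 : 0 < lam) (hlam1 : lam < 1)
    (N : ℕ) (hN : 1 ≤ N)
    (Tv : ℕ → ℝ) (Xv : ℕ → ℝ) (hXpos : ∀ i, 0 < Xv i)
    (hTv : ∀ k, Tv k = (a / lam) * ∑ i ∈ Finset.range k, Xv i)
    (Av : ℝ → ℝ)
    (hAon : ∀ i t, Tv i ≤ t → t < Tv i + Xv i → Av t = a)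
    (hAoff : ∀ i t, Tv i + Xv i ≤ t → t < Tv (i + 1) → Av t = 0)
    (Qv : ℝ → ℝ)
    (hQv : ∀ t, Qv t = ⨆ u : Set.Icc (0:ℝ) t, ∫ v in (u : ℝ)..t, (Av v - 1)) :
    (lam * (a - 1) / (2 * a)) *
        ((∑ i ∈ Finset.range N, Xv i ^ 2) / (∑ i ∈ Finset.range N, Xv i))
      ≤ (1 / Tv N) * ∫ t in (0:ℝ)..(Tv N), Qv t := by
  classical
  have hapos : 0 < a := lt_trans one_pos ha
  have har : 1 < a / lam := by
    rw [lt_div_iff₀ hlam0]; nlinarith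
  set S := ∑ i ∈ Finset.range N, Xv i with hSdef
  have hS0 : 0 < S :=
    Finset.sum_pos (fun i _ => hXpos i) (Finset.nonempty_range_iff.2 (by omega))
  have hT0 : Tv 0 = 0 := by simp [hTv]
  have hTnn : ∀ k, 0 ≤ Tv k := by
    intro k; rw [hTv]
    exact mul_nonneg (by positivity) (Finset.sum_nonneg fun i _ => (hXpos i).le)
  have hTsucc : ∀ k, Tv (k + 1) = Tv k + (a / lam) * Xv k := by
    intro k; rw [hTv, hTv, Finset.sum_range_succ, mul_add]
  have hTstep : ∀ k, Tv k + Xv k ≤ Tv (k + 1) := by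
    intro k; rw [hTsucc]
    have := hXpos k; nlinarith
  have hTmono : Monotone Tv := monotone_nat_of_le_succ fun k =>
    le_trans (le_add_of_nonneg_right (hXpos k).le) (hTstep k)
  -- the measurable model for Av on [0, Tv N)
  set onset : Set ℝ := ⋃ i ∈ Finset.range N, Set.Ico (Tv i) (Tv i + Xv i) with honset
  have honset_meas : MeasurableSet onset :=
    Finset.measurableSet_biUnion _ fun i _ => measurableSet_Ico
  have honset_sub : onset ⊆ Set.Icc 0 (Tv N) := by
    intro t ht
    simp only [honset, Set.mem_iUnion, Finset.mem_range, Set.mem_Ico] at ht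
    obtain ⟨i, hiN, hti⟩ := ht
    exact ⟨le_trans (hTnn i) hti.1, le_trans hti.2.le (le_trans (hTstep i) (hTmono hiN))⟩
  set h : ℝ → ℝ := onset.indicator (fun _ => a) with hdef
  have h_meas : Measurable h := measurable_const.indicator honset_meas
  have h_int : Integrable h := by
    rw [hdef, integrable_indicator_iff honset_meas]
    exact integrableOn_const (ne_of_lt (lt_of_le_of_lt (measure_mono honset_sub) measure_Icc_lt_top))
  have hint1 : ∀ u v : ℝ, IntervalIntegrable (fun x => h x - 1) volume u v :=
    fun u v => h_int.intervalIntegrable.sub intervalIntegrable_const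
  have hcover : ∀ t, 0 ≤ t → t < Tv N → ∃ i < N, Tv i ≤ t ∧ t < Tv (i + 1) := by
    intro t ht0 htN
    have hex : ∃ j, t < Tv (j + 1) := ⟨N - 1, by
      have hh : N - 1 + 1 = N := Nat.succ_pred_eq_of_pos hN
      rwa [hh]⟩
    have hi1 : t < Tv (Nat.find hex + 1) := Nat.find_spec hex
    have hile : Tv (Nat.find hex) ≤ t := by
      rcases Nat.eq_zero_or_pos (Nat.find hex) with h0 | h0
      · rw [h0, hT0]; exact ht0
      · obtain ⟨k', hk'⟩ : ∃ k', Nat.find hex = k' + 1 := ⟨Nat.find hex - 1, by omega⟩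
        have hmin := Nat.find_min hex (show k' < Nat.find hex by omega)
        push_neg at hmin
        rwa [← hk'] at hmin
    have hiN : Nat.find hex < N := by
      by_contra hcon
      push_neg at hcon
      exact absurd (le_trans (hTmono hcon) hile) (not_le.2 htN)
    exact ⟨Nat.find hex, hiN, hile, hi1⟩
  have hAh : ∀ t, 0 ≤ t → t < Tv N → Av t = h t := by
    intro t ht0 htN
    obtain ⟨i, hiN, hi1, hi2⟩ := hcover t ht0 htN
    rcases lt_or_ge t (Tv i + Xv i) with hon | hoff
    · rw [hAon i t hi1 hon, hdef, Set.indicator_of_mem]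
      simp only [honset, Set.mem_iUnion, Finset.mem_range, Set.mem_Ico]
      exact ⟨i, hiN, hi1, hon⟩
    · rw [hAoff i t hoff hi2, hdef, Set.indicator_of_notMem]
      intro hmem
      simp only [honset, Set.mem_iUnion, Finset.mem_range, Set.mem_Ico] at hmem
      obtain ⟨j, hjN, hj1, hj2⟩ := hmem
      rcases lt_trichotomy j i with hji | rfl | hij
      · have h1 : Tv (j + 1) ≤ Tv i := hTmono hji
        linarith [hTstep j]
      · linarith
      · have h1 : Tv (i + 1) ≤ Tv j := hTmono hij
        linarith
  set G : ℝ → ℝ := fun t => ∫ v in (0:ℝ)..t, (h v - 1) with hGdef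
  have hGc : Continuous G := intervalIntegral.continuous_primitive (fun u v => hint1 u v) 0
  have hGA : ∀ u t : ℝ, 0 ≤ u → u ≤ Tv N → 0 ≤ t → t ≤ Tv N →
      (∫ v in u..t, (Av v - 1)) = G t - G u := by
    intro u t hu0 huN ht0 htN
    have hcongr : (∫ v in u..t, (Av v - 1)) = ∫ v in u..t, (h v - 1) := by
      apply intervalIntegral.integral_congr_ae
      have hne : ∀ᵐ x : ℝ, x ≠ Tv N := by
        have hs : {x : ℝ | ¬x ≠ Tv N} = {Tv N} := by ext x; simp [not_not]
        rw [ae_iff, hs]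
        exact measure_singleton _
      filter_upwards [hne] with x hx hxm
      rw [Set.mem_uIoc] at hxm
      have h1 : 0 ≤ x ∧ x < Tv N := by
        rcases hxm with ⟨ha1, ha2⟩ | ⟨ha1, ha2⟩
        · exact ⟨le_trans hu0 ha1.le, lt_of_le_of_ne (le_trans ha2 htN) hx⟩
        · exact ⟨le_trans ht0 ha1.le, lt_of_le_of_ne (le_trans ha2 huN) hx⟩
      rw [hAh x h1.1 h1.2]
    rw [hcongr]
    simp only [hGdef]
    exact (intervalIntegral.integral_interval_sub_left (hint1 0 t) (hint1 0 u)).symm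
  set mfun : ℝ → ℝ := fun t => sInf (G '' Set.Icc 0 t) with hmdef
  have hbdd : ∀ t : ℝ, BddBelow (G '' Set.Icc 0 t) ∧ BddAbove (G '' Set.Icc 0 t) := by
    intro t
    have hc := (isCompact_Icc (a := (0:ℝ)) (b := t)).image hGc
    exact ⟨hc.bddBelow, hc.bddAbove⟩
  have hG0 : G 0 = 0 := intervalIntegral.integral_same
  have hmle : ∀ t u, 0 ≤ u → u ≤ t → mfun t ≤ G u := by
    intro t u hu0 hut
    exact csInf_le (hbdd t).1 ⟨u, ⟨hu0, hut⟩, rfl⟩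
  have hmanti : Antitone mfun := by
    intro s t hst
    rcases lt_or_ge s 0 with hs0 | hs0
    · have he : Set.Icc (0:ℝ) s = ∅ := Set.Icc_eq_empty (by linarith)
      have hms : mfun s = 0 := by rw [hmdef]; simp [he, Real.sInf_empty]
      rw [hms]
      rcases lt_or_ge t 0 with ht0 | ht0
      · have he2 : Set.Icc (0:ℝ) t = ∅ := Set.Icc_eq_empty (by linarith)
        rw [hmdef]; simp [he2, Real.sInf_empty]
      · calc mfun t ≤ G 0 := hmle t 0 le_rfl ht0
          _ = 0 := hG0
    · exact csInf_le_csInf (hbdd t).1 ⟨G s, ⟨s, ⟨hs0, le_rfl⟩, rfl⟩⟩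
        (Set.image_mono (Set.Icc_subset_Icc_right hst))
  set Qe : ℝ → ℝ := fun t => G t - mfun t with hQedef
  have hQform : ∀ t, 0 ≤ t → t ≤ Tv N → Qv t = Qe t := by
    intro t ht0 htN
    haveI : Nonempty (Set.Icc (0:ℝ) t) := ⟨⟨0, Set.left_mem_Icc.2 ht0⟩⟩
    obtain ⟨u₀, hu₀mem, hu₀min⟩ := (isCompact_Icc (a := (0:ℝ)) (b := t)).exists_isMinOn
      ⟨0, Set.left_mem_Icc.2 ht0⟩ hGc.continuousOn
    have hmin : ∀ u ∈ Set.Icc (0:ℝ) t, G u₀ ≤ G u := fun u hu => isMinOn_iff.1 hu₀min u hu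
    have hmfun : mfun t = G u₀ := le_antisymm (hmle t u₀ hu₀mem.1 hu₀mem.2)
      (le_csInf ⟨G 0, 0, Set.left_mem_Icc.2 ht0, rfl⟩
        (by rintro b ⟨u, hu, rfl⟩; exact hmin u hu))
    have hterm : ∀ u : Set.Icc (0:ℝ) t, (∫ v in (u:ℝ)..t, (Av v - 1)) = G t - G u :=
      fun u => hGA u t u.2.1 (le_trans u.2.2 htN) ht0 htN
    rw [hQv t]
    simp only [hQedef]
    rw [hmfun]
    apply le_antisymm
    · apply ciSup_le
      intro u
      show (∫ v in (u:ℝ)..t, (Av v - 1)) ≤ G t - G u₀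
      rw [hterm u]
      have := hmin u u.2
      linarith
    · have hb : BddAbove (Set.range fun u : Set.Icc (0:ℝ) t => ∫ v in (u:ℝ)..t, (Av v - 1)) := by
        refine ⟨G t - G u₀, ?_⟩
        rintro b ⟨u, rfl⟩
        show (∫ v in (u:ℝ)..t, (Av v - 1)) ≤ G t - G u₀
        rw [hterm u]
        have := hmin u u.2
        linarith
      have hle := le_ciSup hb (⟨u₀, hu₀mem⟩ : Set.Icc (0:ℝ) t)
      rwa [hterm ⟨u₀, hu₀mem⟩] at hle
  have hQe_meas : Measurable Qe := hGc.measurable.sub hmanti.measurable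
  set Cb := sSup (G '' Set.Icc 0 (Tv N)) - sInf (G '' Set.Icc 0 (Tv N)) with hCbdef
  have hQe_nonneg : ∀ t, 0 ≤ t → 0 ≤ Qe t := by
    intro t ht0
    have := hmle t t ht0 le_rfl
    simp only [hQedef]
    linarith
  have hQe_le : ∀ t, 0 ≤ t → t ≤ Tv N → Qe t ≤ Cb := by
    intro t ht0 htN
    have h1 : G t ≤ sSup (G '' Set.Icc 0 (Tv N)) := le_csSup (hbdd (Tv N)).2 ⟨t, ⟨ht0, htN⟩, rfl⟩
    have h2 : sInf (G '' Set.Icc 0 (Tv N)) ≤ mfun t :=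
      le_csInf ⟨G 0, 0, Set.left_mem_Icc.2 ht0, rfl⟩
        (by rintro b ⟨u, hu, rfl⟩
            exact csInf_le (hbdd (Tv N)).1 ⟨u, ⟨hu.1, le_trans hu.2 htN⟩, rfl⟩)
    simp only [hQedef, hCbdef]
    linarith
  have hQe_int : IntegrableOn Qe (Set.Icc 0 (Tv N)) := by
    apply Measure.integrableOn_of_bounded (M := Cb) (ne_of_lt measure_Icc_lt_top)
      hQe_meas.aestronglyMeasurable
    rw [ae_restrict_iff' measurableSet_Icc]
    exact .of_forall fun t ht => by
      rw [Real.norm_eq_abs, abs_of_nonneg (hQe_nonneg t ht.1)]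
      exact hQe_le t ht.1 ht.2
  have hcycle : ∀ i, i < N → ∀ t, Tv i ≤ t → t ≤ Tv i + Xv i →
      (a - 1) * (t - Tv i) ≤ Qe t := by
    intro i hiN t ht1 ht2
    have ht0 : 0 ≤ t := le_trans (hTnn i) ht1
    have hstep : G t - G (Tv i) = (a - 1) * (t - Tv i) := by
      have hsub : G t - G (Tv i) = ∫ v in (Tv i)..t, (h v - 1) := by
        simp only [hGdef]
        exact intervalIntegral.integral_interval_sub_left (hint1 0 t) (hint1 0 (Tv i))
      rw [hsub]
      have hcongr : (∫ v in (Tv i)..t, (h v - 1)) = ∫ v in (Tv i)..t, (a - 1) := by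
        apply intervalIntegral.integral_congr_ae
        have hne : ∀ᵐ x : ℝ, x ≠ Tv i + Xv i := by
          have hs : {x : ℝ | ¬x ≠ Tv i + Xv i} = {Tv i + Xv i} := by ext x; simp
          rw [ae_iff, hs]
          exact measure_singleton _
        filter_upwards [hne] with x hx hxm
        rw [Set.uIoc_of_le ht1, Set.mem_Ioc] at hxm
        have hxlt : x < Tv i + Xv i := lt_of_le_of_ne (le_trans hxm.2 ht2) hx
        rw [hdef, Set.indicator_of_mem]
        simp only [honset, Set.mem_iUnion, Finset.mem_range, Set.mem_Ico]
        exact ⟨i, hiN, hxm.1.le, hxlt⟩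
      rw [hcongr, intervalIntegral.integral_const, smul_eq_mul]
      ring
    have hml := hmle t (Tv i) (hTnn i) ht1
    simp only [hQedef]
    linarith
  set J : ℕ → Set ℝ := fun i => Set.Ioc (Tv i) (Tv i + Xv i) with hJdef
  have hJ_sub : ∀ i, i < N → J i ⊆ Set.Ioc 0 (Tv N) := fun i hiN t ht =>
    ⟨lt_of_le_of_lt (hTnn i) ht.1, le_trans ht.2 (le_trans (hTstep i) (hTmono hiN))⟩
  have hdisj2 : ∀ i j : ℕ, i < j → Disjoint (J i) (J j) := by
    intro i j hij
    apply Set.disjoint_left.2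
    intro t hti htj
    have h1 : Tv (i + 1) ≤ Tv j := hTmono hij
    have := hTstep i
    have := hti.2
    have := htj.1
    linarith
  have hJ_disj : (↑(Finset.range N) : Set ℕ).Pairwise (Function.onFun Disjoint J) := by
    intro i _ j _ hij
    rcases lt_or_gt_of_ne hij with hlt | hgt
    · exact hdisj2 i j hlt
    · exact (hdisj2 j i hgt).symm
  have hIoc_int : IntegrableOn Qe (Set.Ioc 0 (Tv N)) := hQe_int.mono_set Set.Ioc_subset_Icc_self
  have hU_sub : (⋃ i ∈ Finset.range N, J i) ⊆ Set.Ioc 0 (Tv N) :=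
    Set.iUnion₂_subset fun i hi => hJ_sub i (Finset.mem_range.1 hi)
  have hsplit : ∑ i ∈ Finset.range N, ∫ t in J i, Qe t ≤ ∫ t in Set.Ioc 0 (Tv N), Qe t := by
    rw [← integral_biUnion_finset (Finset.range N) (fun i _ => measurableSet_Ioc) hJ_disj
      (fun i hi => hIoc_int.mono_set (hJ_sub i (Finset.mem_range.1 hi)))]
    apply setIntegral_mono_set hIoc_int
    · exact (ae_restrict_iff' measurableSet_Ioc).2 (.of_forall fun t ht => hQe_nonneg t ht.1.le)
    · exact .of_forall hU_sub
  have hcell : ∀ i, i < N → (a - 1) * Xv i ^ 2 / 2 ≤ ∫ t in J i, Qe t := by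
    intro i hiN
    have hle : Tv i ≤ Tv i + Xv i := le_add_of_nonneg_right (hXpos i).le
    have hkey : (∫ t in J i, ((a - 1) * (t - Tv i))) ≤ ∫ t in J i, Qe t := by
      apply setIntegral_mono_on
      · exact ((continuous_const.mul (continuous_id.sub continuous_const)).intervalIntegrable
          (Tv i) (Tv i + Xv i)).1
      · exact hQe_int.mono_set (subset_trans (hJ_sub i hiN) Set.Ioc_subset_Icc_self)
      · exact measurableSet_Ioc
      · intro t ht; exact hcycle i hiN t ht.1.le ht.2
    have hval : (∫ t in J i, ((a - 1) * (t - Tv i))) = (a - 1) * Xv i ^ 2 / 2 := by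
      rw [hJdef, ← intervalIntegral.integral_of_le hle, intervalIntegral.integral_const_mul,
        intervalIntegral.integral_sub intervalIntegral.intervalIntegrable_id
          intervalIntegrable_const,
        integral_id, intervalIntegral.integral_const, smul_eq_mul]
      ring
    linarith
  have hQint : (a - 1) / 2 * ∑ i ∈ Finset.range N, Xv i ^ 2 ≤ ∫ t in (0:ℝ)..(Tv N), Qv t := by
    rw [intervalIntegral.integral_of_le (hTnn N),
      setIntegral_congr_fun measurableSet_Ioc (fun t ht => hQform t ht.1.le ht.2)]
    calc (a - 1) / 2 * ∑ i ∈ Finset.range N, Xv i ^ 2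
        = ∑ i ∈ Finset.range N, (a - 1) * Xv i ^ 2 / 2 := by
          rw [Finset.mul_sum]; exact Finset.sum_congr rfl fun i _ => by ring
      _ ≤ ∑ i ∈ Finset.range N, ∫ t in J i, Qe t :=
          Finset.sum_le_sum fun i hi => hcell i (Finset.mem_range.1 hi)
      _ ≤ _ := hsplit
  have hTN : Tv N = (a / lam) * S := hTv N
  have hTNpos : 0 < Tv N := by rw [hTN]; positivity
  have h2 : (lam * (a - 1) / (2 * a)) * ((∑ i ∈ Finset.range N, Xv i ^ 2) / S) =
      (1 / Tv N) * ((a - 1) / 2 * ∑ i ∈ Finset.range N, Xv i ^ 2) := by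
    rw [hTN]
    field_simp
  rw [h2]
  exact mul_le_mul_of_nonneg_left hQint (by positivity)

/-- Theorem 1, expectation form: with the reordered on/off process
built from an i.i.d. sequence of positive random variables with finite positive
mean and infinite second moment, the expected time-averaged queue length over the
cycle endpoints `T N` tends to infinity (expectations taken in `[0,∞]`). -/
theorem stmt_6 {Ω : Type*} [MeasureSpace Ω] [IsProbabilityMeasure (ℙ : Measure Ω)]
    (a lam : ℝ) (ha : 1 < a) (hlam : lam ∈ Set.Ioo (0:ℝ) 1)
    (X : ℕ → Ω → ℝ) (hmeas : ∀ i, Measurable (X i))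
    (hpos : ∀ i ω, 0 < X i ω)
    (hindep : iIndepFun X ℙ)
    (hident : ∀ i, IdentDistrib (X i) (X 0) ℙ ℙ)
    (hint : Integrable (X 0) ℙ)
    (hmean : 0 < ∫ ω, X 0 ω)
    (hsq : ∫⁻ ω, ENNReal.ofReal ((X 0 ω) ^ 2) = ⊤)
    (T : Ω → ℕ → ℝ)
    (hT : ∀ ω N, T ω N = (a / lam) * ∑ i ∈ Finset.range N, X i ω)
    (A : Ω → ℝ → ℝ)
    (hAon : ∀ ω i, ∀ t, T ω i ≤ t → t < T ω i + X i ω → A ω t = a)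
    (hAoff : ∀ ω i, ∀ t, T ω i + X i ω ≤ t → t < T ω (i + 1) → A ω t = 0)
    (Q : Ω → ℝ → ℝ)
    (hQ : ∀ ω t, Q ω t = ⨆ u : Set.Icc (0:ℝ) t, ∫ v in (u : ℝ)..t, (A ω v - 1)) :
    Tendsto
      (fun N => ∫⁻ ω, ENNReal.ofReal ((1 / T ω N) * ∫ t in (0:ℝ)..(T ω N), Q ω t))
      atTop (nhds ⊤) := by
  classical
  obtain ⟨hlam0, hlam1⟩ := hlam
  have hapos : 0 < a := lt_trans one_pos ha
  set c := lam * (a - 1) / (2 * a) with hcdef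
  have hcpos : 0 < c := by
    rw [hcdef]
    have h1 : 0 < a - 1 := by linarith
    positivity
  set m := (∫ ω, X 0 ω) with hmdef
  have hm0 : 0 < m := hmean
  -- the truncated second moments
  set I : ℕ → ℝ≥0∞ := (fun n => ∫⁻ ω, ENNReal.ofReal (min (X 0 ω) (n : ℝ) ^ 2)) with hIdef
  have hminnn : ∀ (x : ℝ) (n : ℕ), 0 < x → 0 ≤ min x (n : ℝ) := fun x n hx =>
    le_min hx.le (Nat.cast_nonneg n)
  have hImeas : ∀ n : ℕ, Measurable fun ω => ENNReal.ofReal (min (X 0 ω) (n : ℝ) ^ 2) :=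
    fun n => (((hmeas 0).min measurable_const).pow_const 2).ennreal_ofReal
  have hImonoptw : Monotone fun (n : ℕ) (ω : Ω) => ENNReal.ofReal (min (X 0 ω) (n : ℝ) ^ 2) := by
    intro n n' hnn' ω
    apply ENNReal.ofReal_le_ofReal
    apply pow_le_pow_left₀ (hminnn _ _ (hpos 0 ω))
    exact min_le_min le_rfl (Nat.cast_le.2 hnn')
  have hImono : Monotone I := fun n n' h => lintegral_mono fun ω => hImonoptw h ω
  have hIsup : (⨆ n, I n) = ⊤ := by
    calc (⨆ n, I n) = ∫⁻ ω, ⨆ n : ℕ, ENNReal.ofReal (min (X 0 ω) (n : ℝ) ^ 2) :=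
          (lintegral_iSup hImeas hImonoptw).symm
      _ = ∫⁻ ω, ENNReal.ofReal (X 0 ω ^ 2) := by
          apply lintegral_congr
          intro ω
          apply le_antisymm
          · apply iSup_le; intro n
            exact ENNReal.ofReal_le_ofReal
              (pow_le_pow_left₀ (hminnn _ _ (hpos 0 ω)) (min_le_left _ _) 2)
          · obtain ⟨n, hn⟩ := exists_nat_ge (X 0 ω)
            exact le_iSup_of_le n (le_of_eq (by rw [min_eq_left hn]))
      _ = ⊤ := hsq
  have hItop : Tendsto I atTop (𝓝 ⊤) := hIsup ▸ tendsto_atTop_iSup hImono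
  set d : ℝ≥0∞ := ENNReal.ofReal c * ENNReal.ofReal ((1 + 2 * m)⁻¹) * (2:ℝ≥0∞)⁻¹ with hddef
  have hd0 : d ≠ 0 := by
    rw [hddef]
    refine mul_ne_zero (mul_ne_zero ?_ ?_) ?_
    · exact (ENNReal.ofReal_pos.2 hcpos).ne'
    · exact (ENNReal.ofReal_pos.2 (by positivity)).ne'
    · simp
  have hdtop : d ≠ ⊤ := by
    rw [hddef]
    exact ENNReal.mul_ne_top (ENNReal.mul_ne_top ENNReal.ofReal_ne_top ENNReal.ofReal_ne_top)
      (by simp)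
  -- per-N lower bound
  have hbound : ∀ N : ℕ, 2 ≤ N →
      d * I N ≤ ∫⁻ ω, ENNReal.ofReal ((1 / T ω N) * ∫ t in (0:ℝ)..(T ω N), Q ω t) := by
    intro N hN2
    have hN1 : 1 ≤ N := by omega
    have hNR : (1:ℝ) ≤ (N:ℝ) := by exact_mod_cast hN1
    have hNpos : (0:ℝ) < N := by linarith
    set Sf : Ω → ℝ := fun ω => ∑ i ∈ Finset.range N, X i ω with hSfdef
    have hSfpos : ∀ ω, 0 < Sf ω := fun ω =>
      Finset.sum_pos (fun i _ => hpos i ω) (Finset.nonempty_range_iff.2 (by omega))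
    have hSfmeas : Measurable Sf := Finset.measurable_sum _ fun i _ => hmeas i
    -- Step 1: pathwise bound
    have step1 : ∫⁻ ω, ENNReal.ofReal (c * ((∑ i ∈ Finset.range N, X i ω ^ 2) / Sf ω))
        ≤ ∫⁻ ω, ENNReal.ofReal ((1 / T ω N) * ∫ t in (0:ℝ)..(T ω N), Q ω t) := by
      apply lintegral_mono
      intro ω
      apply ENNReal.ofReal_le_ofReal
      exact pathwise a lam ha hlam0 hlam1 N hN1 (T ω) (fun i => X i ω) (fun i => hpos i ω)
        (fun k => hT ω k) (A ω) (fun i t => hAon ω i t) (fun i t => hAoff ω i t) (Q ω)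
        (fun t => hQ ω t)
    -- Step 2: factor out c and split the sum
    have step2 : ∫⁻ ω, ENNReal.ofReal (c * ((∑ i ∈ Finset.range N, X i ω ^ 2) / Sf ω))
        = ENNReal.ofReal c *
            ∑ j ∈ Finset.range N, ∫⁻ ω, ENNReal.ofReal (X j ω ^ 2 / Sf ω) := by
      have h1 : ∀ ω, ENNReal.ofReal (c * ((∑ i ∈ Finset.range N, X i ω ^ 2) / Sf ω))
          = ENNReal.ofReal c *
              ∑ j ∈ Finset.range N, ENNReal.ofReal (X j ω ^ 2 / Sf ω) := by
        intro ω
        rw [ENNReal.ofReal_mul hcpos.le]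
        congr 1
        rw [Finset.sum_div, ENNReal.ofReal_sum_of_nonneg]
        intro i _
        exact div_nonneg (sq_nonneg _) (hSfpos ω).le
      calc ∫⁻ ω, ENNReal.ofReal (c * ((∑ i ∈ Finset.range N, X i ω ^ 2) / Sf ω))
          = ∫⁻ ω, ENNReal.ofReal c *
              ∑ j ∈ Finset.range N, ENNReal.ofReal (X j ω ^ 2 / Sf ω) :=
            lintegral_congr h1
        _ = ENNReal.ofReal c *
              ∫⁻ ω, ∑ j ∈ Finset.range N, ENNReal.ofReal (X j ω ^ 2 / Sf ω) := by
            rw [lintegral_const_mul]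
            exact Finset.measurable_sum _ fun j _ =>
              (((hmeas j).pow_const 2).div hSfmeas).ennreal_ofReal
        _ = ENNReal.ofReal c *
              ∑ j ∈ Finset.range N, ∫⁻ ω, ENNReal.ofReal (X j ω ^ 2 / Sf ω) := by
            rw [lintegral_finset_sum]
            exact fun j _ => (((hmeas j).pow_const 2).div hSfmeas).ennreal_ofReal
    -- Step 3: per-term lower bound
    have step3 : ∀ j ∈ Finset.range N,
        I N * (ENNReal.ofReal (((N:ℝ) * (1 + 2 * m))⁻¹) * (2:ℝ≥0∞)⁻¹)
          ≤ ∫⁻ ω, ENNReal.ofReal (X j ω ^ 2 / Sf ω) := by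
      intro j hj
      have hjN : j < N := Finset.mem_range.1 hj
      set s : Finset ℕ := (Finset.range N).erase j with hsdef
      set Sd : Ω → ℝ := fun ω => ∑ i ∈ s, X i ω with hSddef
      have hSdnn : ∀ ω, 0 ≤ Sd ω := fun ω => Finset.sum_nonneg fun i _ => (hpos i ω).le
      have hSdmeas : Measurable Sd := Finset.measurable_sum _ fun i _ => hmeas i
      have hsplitω : ∀ ω, Sf ω = X j ω + Sd ω := by
        intro ω
        rw [hSfdef, hSddef, hsdef]
        exact (Finset.add_sum_erase _ _ hj).symm
      -- pointwise bound with truncation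
      have hptw : ∀ ω, ENNReal.ofReal (min (X j ω) (N:ℝ) ^ 2) *
          ENNReal.ofReal (((N:ℝ) + Sd ω)⁻¹) ≤ ENNReal.ofReal (X j ω ^ 2 / Sf ω) := by
        intro ω
        rw [← ENNReal.ofReal_mul (by positivity)]
        apply ENNReal.ofReal_le_ofReal
        rw [← div_eq_mul_inv, hsplitω ω]
        exact aux_ratio (hpos j ω) (hSdnn ω) hNR
      -- independence factorization
      have hindj : IndepFun (X j) (∑ i ∈ s, X i) ℙ :=
        (hindep.indepFun_finsetSum_of_notMem hmeas (Finset.notMem_erase j _)).symm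
      have hφ : Measurable fun x : ℝ => ENNReal.ofReal (min x (N:ℝ) ^ 2) :=
        ((measurable_id.min measurable_const).pow_const 2).ennreal_ofReal
      have hψ : Measurable fun x : ℝ => ENNReal.ofReal (((N:ℝ) + x)⁻¹) :=
        ((measurable_const.add measurable_id).inv).ennreal_ofReal
      have hsum_apply : ∀ ω, (∑ i ∈ s, X i) ω = Sd ω := by
        intro ω; rw [hSddef]; simp
      have hfact : ∫⁻ ω, ENNReal.ofReal (min (X j ω) (N:ℝ) ^ 2) *
            ENNReal.ofReal (((N:ℝ) + Sd ω)⁻¹)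
          = (∫⁻ ω, ENNReal.ofReal (min (X j ω) (N:ℝ) ^ 2)) *
            ∫⁻ ω, ENNReal.ofReal (((N:ℝ) + Sd ω)⁻¹) := by
        have := lintegral_mul_eq_lintegral_mul_lintegral_of_indepFun
          (μ := ℙ) (f := fun ω => ENNReal.ofReal (min (X j ω) (N:ℝ) ^ 2))
          (g := fun ω => ENNReal.ofReal (((N:ℝ) + Sd ω)⁻¹))
          (hφ.comp (hmeas j)) (hψ.comp hSdmeas) ?_
        · simpa [Pi.mul_apply] using this
        · have hcomp := hindj.comp (φ := fun x : ℝ => ENNReal.ofReal (min x (N:ℝ) ^ 2))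
            (ψ := fun x : ℝ => ENNReal.ofReal (((N:ℝ) + x)⁻¹)) hφ hψ
          have heq : (fun x : ℝ => ENNReal.ofReal (((N:ℝ) + x)⁻¹)) ∘ (∑ i ∈ s, X i)
              = fun ω => ENNReal.ofReal (((N:ℝ) + Sd ω)⁻¹) := by
            funext ω; simp [Function.comp, hsum_apply ω]
          rw [heq] at hcomp
          exact hcomp
      -- identical distribution: first factor is I N
      have hident' : (∫⁻ ω, ENNReal.ofReal (min (X j ω) (N:ℝ) ^ 2)) = I N := by
        rw [hIdef]
        exact ((hident j).comp hφ).lintegral_eq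
      -- Markov: second factor at least ofReal ((N (1+2m))⁻¹) / 2
      have hSdint : Integrable Sd ℙ :=
        integrable_finset_sum _ fun i _ => (hident i).integrable_iff.2 hint
      have hSdmean : ∫ ω, Sd ω = ((N:ℝ) - 1) * m := by
        rw [hSddef]
        rw [integral_finset_sum _ fun i _ => (hident i).integrable_iff.2 hint]
        have : ∀ i ∈ s, ∫ ω, X i ω = m := fun i _ => (hident i).integral_eq
        rw [Finset.sum_congr rfl this, Finset.sum_const, Finset.card_erase_of_mem hj,
          Finset.card_range, nsmul_eq_mul, Nat.cast_sub hN1, Nat.cast_one]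
      set B : Set Ω := {ω | Sd ω ≤ 2 * ((N:ℝ) - 1) * m} with hBdef
      have hBmeas : MeasurableSet B := measurableSet_le hSdmeas measurable_const
      have hβpos : 0 < ((N:ℝ) - 1) * m := by
        have : (2:ℝ) ≤ (N:ℝ) := by exact_mod_cast hN2
        nlinarith
      have hcompl : ℙ Bᶜ ≤ 2⁻¹ := by
        have hsub : Bᶜ ⊆ {ω | ENNReal.ofReal (2 * (((N:ℝ) - 1) * m)) ≤
            ENNReal.ofReal (Sd ω)} := by
          intro ω hω
          simp only [hBdef, Set.mem_compl_iff, Set.mem_setOf_eq, not_le] at hω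
          exact Set.mem_setOf_eq ▸ ENNReal.ofReal_le_ofReal (by linarith)
        have hmark := mul_meas_ge_le_lintegral₀
          (μ := ℙ) (f := fun ω => ENNReal.ofReal (Sd ω))
          (hSdmeas.ennreal_ofReal.aemeasurable) (ENNReal.ofReal (2 * (((N:ℝ) - 1) * m)))
        have hlint : ∫⁻ ω, ENNReal.ofReal (Sd ω) = ENNReal.ofReal (((N:ℝ) - 1) * m) := by
          rw [← ofReal_integral_eq_lintegral_ofReal hSdint (.of_forall fun ω => hSdnn ω),
            hSdmean]
        rw [hlint] at hmark
        have h2 : ℙ {ω | ENNReal.ofReal (2 * (((N:ℝ) - 1) * m)) ≤ ENNReal.ofReal (Sd ω)}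
            ≤ ENNReal.ofReal (((N:ℝ) - 1) * m) / ENNReal.ofReal (2 * (((N:ℝ) - 1) * m)) := by
          rw [ENNReal.le_div_iff_mul_le
            (Or.inl (ENNReal.ofReal_pos.2 (by linarith)).ne') (Or.inl ENNReal.ofReal_ne_top)]
          rw [mul_comm]
          exact hmark
        have h3 : ENNReal.ofReal (((N:ℝ) - 1) * m) / ENNReal.ofReal (2 * (((N:ℝ) - 1) * m))
            = 2⁻¹ := by
          rw [← ENNReal.ofReal_div_of_pos (by linarith)]
          rw [show ((N:ℝ) - 1) * m / (2 * (((N:ℝ) - 1) * m)) = 2⁻¹ by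
            rw [mul_comm 2, div_mul_eq_div_div, div_self hβpos.ne', one_div]]
          simp [ENNReal.ofReal_inv_of_pos]
        calc ℙ Bᶜ ≤ _ := measure_mono hsub
          _ ≤ _ := h2
          _ = 2⁻¹ := h3
      have hB : 2⁻¹ ≤ ℙ B := by
        have h1 : (1:ℝ≥0∞) ≤ ℙ B + 2⁻¹ := by
          calc (1:ℝ≥0∞) = ℙ Set.univ := (measure_univ).symm
            _ = ℙ B + ℙ Bᶜ := (measure_add_measure_compl hBmeas).symm
            _ ≤ ℙ B + 2⁻¹ := by gcongr
        have h2 : (2:ℝ≥0∞)⁻¹ + 2⁻¹ ≤ ℙ B + 2⁻¹ := by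
          calc (2:ℝ≥0∞)⁻¹ + 2⁻¹ = 1 := by
                rw [← ENNReal.add_halves 1]; norm_num
            _ ≤ ℙ B + 2⁻¹ := h1
        exact ENNReal.le_of_add_le_add_right (by simp) h2
      have hmark2 : ENNReal.ofReal (((N:ℝ) * (1 + 2 * m))⁻¹) * (2:ℝ≥0∞)⁻¹
          ≤ ∫⁻ ω, ENNReal.ofReal (((N:ℝ) + Sd ω)⁻¹) := by
        have hind : ∀ ω, B.indicator
            (fun _ => ENNReal.ofReal (((N:ℝ) * (1 + 2 * m))⁻¹)) ω
            ≤ ENNReal.ofReal (((N:ℝ) + Sd ω)⁻¹) := by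
          intro ω
          by_cases hω : ω ∈ B
          · rw [Set.indicator_of_mem hω]
            apply ENNReal.ofReal_le_ofReal
            have hωB : Sd ω ≤ 2 * ((N:ℝ) - 1) * m := hω
            apply inv_anti₀ (add_pos_of_pos_of_nonneg hNpos (hSdnn ω))
            nlinarith
          · rw [Set.indicator_of_notMem hω]; exact zero_le
        calc ENNReal.ofReal (((N:ℝ) * (1 + 2 * m))⁻¹) * 2⁻¹
            ≤ ENNReal.ofReal (((N:ℝ) * (1 + 2 * m))⁻¹) * ℙ B :=
              mul_le_mul_right hB _
          _ = ∫⁻ ω, B.indicator (fun _ => ENNReal.ofReal (((N:ℝ) * (1 + 2 * m))⁻¹)) ω := by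
              rw [lintegral_indicator hBmeas]
              simp
          _ ≤ _ := lintegral_mono hind
      calc I N * (ENNReal.ofReal (((N:ℝ) * (1 + 2 * m))⁻¹) * (2:ℝ≥0∞)⁻¹)
          ≤ (∫⁻ ω, ENNReal.ofReal (min (X j ω) (N:ℝ) ^ 2)) *
              ∫⁻ ω, ENNReal.ofReal (((N:ℝ) + Sd ω)⁻¹) := by
            rw [hident']
            exact mul_le_mul_right hmark2 _
        _ = ∫⁻ ω, ENNReal.ofReal (min (X j ω) (N:ℝ) ^ 2) *
              ENNReal.ofReal (((N:ℝ) + Sd ω)⁻¹) := hfact.symm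
        _ ≤ ∫⁻ ω, ENNReal.ofReal (X j ω ^ 2 / Sf ω) := lintegral_mono hptw
    -- combine
    have hsum : (N:ℝ≥0∞) * (I N * (ENNReal.ofReal (((N:ℝ) * (1 + 2 * m))⁻¹) * (2:ℝ≥0∞)⁻¹))
        ≤ ∑ j ∈ Finset.range N, ∫⁻ ω, ENNReal.ofReal (X j ω ^ 2 / Sf ω) := by
      calc (N:ℝ≥0∞) * (I N * (ENNReal.ofReal (((N:ℝ) * (1 + 2 * m))⁻¹) * (2:ℝ≥0∞)⁻¹))
          = ∑ _j ∈ Finset.range N,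
              (I N * (ENNReal.ofReal (((N:ℝ) * (1 + 2 * m))⁻¹) * (2:ℝ≥0∞)⁻¹)) := by
            rw [Finset.sum_const, Finset.card_range, nsmul_eq_mul]
        _ ≤ _ := Finset.sum_le_sum step3
    have hNq : (N:ℝ≥0∞) * ENNReal.ofReal (((N:ℝ) * (1 + 2 * m))⁻¹)
        = ENNReal.ofReal ((1 + 2 * m)⁻¹) := by
      rw [← ENNReal.ofReal_natCast N, ← ENNReal.ofReal_mul (Nat.cast_nonneg N)]
      congr 1
      field_simp
    calc d * I N
        = ENNReal.ofReal c * ((N:ℝ≥0∞) *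
            (I N * (ENNReal.ofReal (((N:ℝ) * (1 + 2 * m))⁻¹) * (2:ℝ≥0∞)⁻¹))) := by
          rw [hddef, ← hNq]; ring
      _ ≤ ENNReal.ofReal c *
            ∑ j ∈ Finset.range N, ∫⁻ ω, ENNReal.ofReal (X j ω ^ 2 / Sf ω) :=
          mul_le_mul_right hsum _
      _ = ∫⁻ ω, ENNReal.ofReal (c * ((∑ i ∈ Finset.range N, X i ω ^ 2) / Sf ω)) := step2.symm
      _ ≤ _ := step1
  -- conclude
  have hdtend : Tendsto (fun N => d * I N) atTop (𝓝 ⊤) := by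
    have := ENNReal.Tendsto.const_mul (a := d) hItop (Or.inl (by simp))
    rwa [ENNReal.mul_top hd0] at this
  apply tendsto_nhds_top_mono hdtend
  filter_upwards [eventually_ge_atTop 2] with N hN2
  exact hbound N hN2
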